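/- Let v be a leaf vertex of a banana tree G with unique neighbor w, let a = |E(v,w)| be the number of edges between v and w, and let G' = G − v. Then for every integer k > 0, f(G, v, k) = min{ f(G', w, a·⌊k/a⌋), a·⌈k/a⌉ − k + f(G', w, a·⌈k/a⌉) }. -/

import Mathlib

open Finset

attribute [local instance] Classical.propDecidable

noncomputable section

/-- A finite loopless multigraph on vertex type `V`, given by a symmetric
edge-multiplicity function: `mul u v` is the number of edges joining `u` and `v`. -/
structure Multigraph (V : Type) [Fintype V] where
  mul : V → V → ℕ
  symm : ∀ u v, mul u v = mul v u
  loopless : ∀ v, mul v v = 0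

namespace Multigraph

variable {V : Type} [Fintype V]

/-- The underlying simple graph of a multigraph. -/
def underlying (G : Multigraph V) : SimpleGraph V where
  Adj u v := 0 < G.mul u v
  symm := by
    constructor
    intro u v h
    rwa [G.symm] at h
  loopless := by
    constructor
    intro v h
    simp [G.loopless] at h

/-- A multigraph is connected if its underlying simple graph is. -/
def Connected (G : Multigraph V) : Prop := G.underlying.Connected

/-- A banana tree is a multigraph whose underlying simple graph is a tree. -/
def IsBananaTree (G : Multigraph V) : Prop := G.underlying.IsTree

/-- The valence (degree) of a vertex. -/
def valence (G : Multigraph V) (v : V) : ℕ := ∑ w, G.mul v w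

/-- The number of edges of a multigraph. -/
def edgeCount (G : Multigraph V) : ℕ := (∑ u, ∑ v, G.mul u v) / 2

/-- The genus (first Betti number) `|E| - |V| + 1` of a connected multigraph. -/
def genus (G : Multigraph V) : ℕ := G.edgeCount + 1 - Fintype.card V

/-- The degree of a divisor: the total number of chips. -/
def degree (D : V → ℤ) : ℤ := ∑ v, D v

/-- A divisor is effective if it is nonnegative everywhere. -/
def Effective (D : V → ℤ) : Prop := ∀ v, 0 ≤ D v

/-- Linear equivalence of divisors: `D'` is obtained from `D` by a finite sequence of
chip-firing moves, equivalently (for connected graphs) via an integral firing script `σ`. -/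
def LinEquiv (G : Multigraph V) (D D' : V → ℤ) : Prop :=
  ∃ σ : V → ℤ, ∀ v, D' v = D v + ∑ w, (G.mul v w : ℤ) * (σ w - σ v)

/-- A divisor has positive rank if for every vertex `v` it is linearly equivalent to an
effective divisor placing at least one chip on `v`. -/
def PosRank (G : Multigraph V) (D : V → ℤ) : Prop :=
  ∀ v, ∃ D', G.LinEquiv D D' ∧ Effective D' ∧ 1 ≤ D' v

/-- The (divisorial) gonality: the minimum degree of a positive-rank effective divisor. -/
def gonality (G : Multigraph V) : ℕ :=
  sInf {d : ℕ | ∃ D : V → ℤ, Effective D ∧ G.PosRank D ∧ degree D = (d : ℤ)}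

/-- `f(G, v, k)`: the minimum degree of an effective divisor `D` on `G` such that
`D + k·v` has positive rank. -/
def fmin (G : Multigraph V) (v : V) (k : ℕ) : ℕ :=
  sInf {d : ℕ | ∃ D : V → ℤ, Effective D ∧
    G.PosRank (fun u => D u + if u = v then (k : ℤ) else 0) ∧ degree D = (d : ℤ)}

/-- Delete a vertex from a multigraph. -/
def deleteVertex (G : Multigraph V) (v : V) : Multigraph {u : V // u ≠ v} where
  mul a b := G.mul a.1 b.1
  symm := fun a b => G.symm a.1 b.1
  loopless := fun a => G.loopless a.1

/-- Delete one single edge between `u` and `w` (if any) from a multigraph. -/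
def deleteOneEdge (G : Multigraph V) (u w : V) : Multigraph V where
  mul x y := if (x = u ∧ y = w) ∨ (x = w ∧ y = u) then G.mul x y - 1 else G.mul x y
  symm := by
    intro x y
    by_cases h : (x = u ∧ y = w) ∨ (x = w ∧ y = u)
    · have h' : (y = u ∧ x = w) ∨ (y = w ∧ x = u) := by tauto
      simp [h, h', G.symm x y]
    · have h' : ¬((y = u ∧ x = w) ∨ (y = w ∧ x = u)) := by tauto
      simp [h, h', G.symm x y]
  loopless := by
    intro v
    by_cases h : (v = u ∧ v = w) ∨ (v = w ∧ v = u)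
    · simp [h, G.loopless]
    · simp [h, G.loopless]

/-- The adjacency move from `v` to `w` on a banana tree: the subset-firing move at the
connected component of `v` after removing the `v`-`w` edge bunch.  Its net effect is to
move `|E(v,w)|` chips from `v` to `w`. -/
def adjMove (G : Multigraph V) (v w : V) (D : V → ℤ) : V → ℤ :=
  fun u => if u = v then D u - (G.mul v w : ℤ)
    else if u = w then D u + (G.mul v w : ℤ) else D u

/-- A single legal adjacency move: both divisors are effective and the second is
obtained from the first by an adjacency move between adjacent vertices. -/
def LegalAdjStep (G : Multigraph V) (D D' : V → ℤ) : Prop :=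
  ∃ v w, G.underlying.Adj v w ∧ Effective D ∧ Effective D' ∧ D' = G.adjMove v w D

/-- A scramble: a collection of nonempty vertex sets (eggs), each inducing a connected
subgraph. -/
def IsScramble (G : Multigraph V) (S : Finset (Finset V)) : Prop :=
  ∀ X ∈ S, X.Nonempty ∧ (G.underlying.induce (X : Set V)).Connected

/-- A hitting set of a scramble: a set of vertices meeting every egg. -/
def IsHittingSet (S : Finset (Finset V)) (T : Finset V) : Prop :=
  ∀ X ∈ S, (X ∩ T).Nonempty

/-- The hitting number of a scramble. -/
def hittingNumber (S : Finset (Finset V)) : ℕ∞ :=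
  sInf {t : ℕ∞ | ∃ T : Finset V, IsHittingSet S T ∧ (T.card : ℕ∞) = t}

/-- The simple graph remaining after removing `c u w` of the edges of each bunch. -/
def cutGraph (G : Multigraph V) (c : V → V → ℕ) : SimpleGraph V where
  Adj u w := u ≠ w ∧ c u w < G.mul u w ∧ c w u < G.mul w u
  symm := ⟨fun u w h => ⟨h.1.symm, h.2.2, h.2.1⟩⟩
  loopless := ⟨fun u h => h.1 rfl⟩

/-- `c` describes an egg-cut of the scramble `S`: a set of edges of `G` (given by the
number `c u w` of edges removed from each bunch) whose removal leaves at least two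
connected components each completely containing an egg. -/
def IsEggCut (G : Multigraph V) (S : Finset (Finset V)) (c : V → V → ℕ) : Prop :=
  (∀ u w, c u w = c w u) ∧ (∀ u w, c u w ≤ G.mul u w) ∧
  ∃ X₁ ∈ S, ∃ X₂ ∈ S,
    (∀ x ∈ X₁, ∀ y ∈ X₁, (G.cutGraph c).Reachable x y) ∧
    (∀ x ∈ X₂, ∀ y ∈ X₂, (G.cutGraph c).Reachable x y) ∧
    (∀ x ∈ X₁, ∀ y ∈ X₂, ¬ (G.cutGraph c).Reachable x y)

/-- The egg-cut number of a scramble (`⊤` if no egg-cut exists). -/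
def eggCutNumber (G : Multigraph V) (S : Finset (Finset V)) : ℕ∞ :=
  sInf {t : ℕ∞ | ∃ c : V → V → ℕ, G.IsEggCut S c ∧
    ((∑ u, ∑ w, c u w : ℕ) : ℕ∞) = 2 * t}

/-- The order of a scramble: the minimum of its hitting number and egg-cut number. -/
def scrambleOrder (G : Multigraph V) (S : Finset (Finset V)) : ℕ∞ :=
  min (hittingNumber S) (G.eggCutNumber S)

/-- The scramble number of a multigraph: the maximum order of a scramble on it. -/
def scrambleNumber (G : Multigraph V) : ℕ∞ :=
  sSup {m : ℕ∞ | ∃ S : Finset (Finset V), G.IsScramble S ∧ G.scrambleOrder S = m}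

/-- The weight of a node `t` in a tree-cut decomposition `(T, X)`: the number of vertices
mapped to `t` plus the number of edges routed through `t` with neither endpoint mapped
to `t`. -/
def nodeWeight (G : Multigraph V) {N : Type} [Fintype N] (T : SimpleGraph N)
    (X : V → N) (t : N) : ℕ :=
  (Finset.univ.filter fun v => X v = t).card +
    (∑ u, ∑ w, if X u ≠ t ∧ X w ≠ t ∧
        ¬ (T.deleteEdges {e | t ∈ e}).Reachable (X u) (X w)
      then G.mul u w else 0) / 2

/-- The weight of a link `pq` in a tree-cut decomposition `(T, X)`: the number of edges
of `G` routed through that link. -/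
def linkWeight (G : Multigraph V) {N : Type} (T : SimpleGraph N)
    (X : V → N) (p q : N) : ℕ :=
  (∑ u, ∑ w, if ¬ (T.deleteEdges {s(p, q)}).Reachable (X u) (X w)
    then G.mul u w else 0) / 2

/-- The width of a tree-cut decomposition `(T, X)`: the maximum of all node and link
weights. -/
def tcdWidth (G : Multigraph V) {N : Type} [Fintype N] (T : SimpleGraph N)
    (X : V → N) : ℕ :=
  max (Finset.univ.sup fun t => G.nodeWeight T X t)
      (Finset.univ.sup fun p : N × N =>
        if T.Adj p.1 p.2 then G.linkWeight T X p.1 p.2 else 0)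

/-- The screewidth of a multigraph: the minimum width of a tree-cut decomposition. -/
def screewidth (G : Multigraph V) : ℕ :=
  sInf {w : ℕ | ∃ (m : ℕ) (T : SimpleGraph (Fin m)), T.IsTree ∧
    ∃ X : V → Fin m, G.tcdWidth T X = w}

/-- The banana path on `n+1` vertices `v_0, …, v_n`, with `a i` edges joining
`v_i` and `v_{i+1}` (for `0 ≤ i < n`). -/
def bananaPath (n : ℕ) (a : ℕ → ℕ) : Multigraph (Fin (n + 1)) where
  mul i j := if i.val + 1 = j.val then a i.val else if j.val + 1 = i.val then a j.val else 0
  symm := by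
    intro u v
    try dsimp only
    split_ifs <;> first | rfl | (exfalso; omega)
  loopless := by
    intro v
    have h : ¬ (v.val + 1 = v.val) := by omega
    simp [h]

/-- The banana star with central vertex `Sum.inl ()` and, for each `i : Fin k`,
`r i` leaves joined to the center by `a i` parallel edges. -/
def bananaStar (k : ℕ) (a r : Fin k → ℕ) :
    Multigraph (Unit ⊕ (Σ i : Fin k, Fin (r i))) where
  mul x y :=
    match x, y with
    | Sum.inl _, Sum.inr ⟨i, _⟩ => a i
    | Sum.inr ⟨i, _⟩, Sum.inl _ => a i
    | _, _ => 0
  symm := by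
    intro u v
    rcases u with u | ⟨i, li⟩ <;> rcases v with v | ⟨j, lj⟩ <;> rfl
  loopless := by
    intro v
    rcases v with v | ⟨i, li⟩ <;> rfl

end Multigraph

namespace Multigraph

section Aux

variable {V : Type} [Fintype V]

private lemma sum_split (v : V) (g : V → ℤ) :
    ∑ x, g x = g v + ∑ x : {u : V // u ≠ v}, g x.1 := by
  classical
  rw [Fintype.sum_eq_add_sum_compl v g]
  congr 1
  exact Finset.sum_subtype _ (fun x => by simp) g

private lemma linEquiv_add (G : Multigraph V) {D E : V → ℤ} (h : G.LinEquiv D E) (Δ : V → ℤ) :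
    G.LinEquiv (fun x => D x + Δ x) (fun x => E x + Δ x) := by
  obtain ⟨σ, hσ⟩ := h
  exact ⟨σ, fun x => by simp only []; rw [hσ x]; ring⟩

private lemma posRank_mono (G : Multigraph V) {D Δ : V → ℤ} (h : G.PosRank D)
    (hΔ : ∀ x, 0 ≤ Δ x) : G.PosRank (fun x => D x + Δ x) := by
  intro u
  obtain ⟨E, hE, hEeff, hEu⟩ := h u
  exact ⟨fun x => E x + Δ x, linEquiv_add G hE Δ, fun x => add_nonneg (hEeff x) (hΔ x),
    le_trans hEu (le_add_of_nonneg_right (hΔ u))⟩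

private lemma fmin_set_nonempty (G : Multigraph V) (v : V) (k : ℕ) :
    {d : ℕ | ∃ D : V → ℤ, Effective D ∧
      G.PosRank (fun u => D u + if u = v then (k : ℤ) else 0) ∧ degree D = (d : ℤ)}.Nonempty := by
  refine ⟨Fintype.card V, fun _ => 1, fun _ => zero_le_one, ?_, by simp [degree]⟩
  intro u
  refine ⟨fun x => 1 + if x = v then (k : ℤ) else 0, ⟨0, fun x => by simp⟩, ?_, ?_⟩
  · intro x
    have : (0:ℤ) ≤ if x = v then (k:ℤ) else 0 := by split <;> positivity
    simp only []
    linarith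
  · have : (0:ℤ) ≤ if u = v then (k:ℤ) else 0 := by split <;> positivity
    simp only []
    linarith

private lemma mul_v_eq_zero (G : Multigraph V) {v w : V}
    (hleaf : ∀ u, G.underlying.Adj v u → u = w) {y : V} (hy : y ≠ w) :
    G.mul v y = 0 := by
  by_contra h
  exact hy (hleaf y (Nat.pos_of_ne_zero h))

private lemma fmin_exists (G : Multigraph V) (v : V) (k : ℕ) :
    ∃ D : V → ℤ, Effective D ∧
      G.PosRank (fun u => D u + if u = v then (k : ℤ) else 0) ∧
      degree D = ((G.fmin v k : ℕ) : ℤ) :=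
  Nat.sInf_mem (fmin_set_nonempty G v k)

private lemma fmin_le_aux (G : Multigraph V) (v w : V)
    (hleaf : ∀ u, G.underlying.Adj v u → u = w) (hne : w ≠ v)
    (a : ℕ) (ha : a = G.mul v w) (k : ℕ) (hk : 0 < k) (t : ℕ) :
    G.fmin v k ≤ (a * t - k) + (G.deleteVertex v).fmin ⟨w, hne⟩ (a * t) := by
  classical
  obtain ⟨D', hD'eff, hD'pr, hD'deg⟩ := fmin_exists (G.deleteVertex v) ⟨w, hne⟩ (a * t)
  set m := (G.deleteVertex v).fmin ⟨w, hne⟩ (a * t) with hm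
  set D : V → ℤ := fun x => if h : x = v then ((a * t - k : ℕ) : ℤ) else D' ⟨x, h⟩ with hDdef
  apply Nat.sInf_le
  refine ⟨D, ?_, ?_, ?_⟩
  · intro x
    by_cases hx : x = v
    · simp [hDdef, hx]
    · simp only [hDdef, dif_neg hx]
      exact hD'eff ⟨x, hx⟩
  · intro u
    by_cases hu : u = v
    · refine ⟨fun x => D x + if x = v then (k : ℤ) else 0, ⟨0, fun x => by simp⟩, ?_, ?_⟩
      · intro x
        by_cases hx : x = v
        · simp only [hDdef, dif_pos hx, if_pos hx]
          positivity
        · simp only [hDdef, dif_neg hx, if_neg hx, add_zero]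
          exact hD'eff ⟨x, hx⟩
      · subst hu
        simp only [hDdef, dif_pos rfl, eq_self_iff_true, if_true]
        have h0 : (0:ℤ) ≤ ((a * t - k : ℕ) : ℤ) := Int.ofNat_nonneg _
        have hk' : (1:ℤ) ≤ (k : ℤ) := by exact_mod_cast hk
        linarith
    · obtain ⟨E', ⟨σ', hσ'⟩, hE'eff, hE'u⟩ := hD'pr ⟨u, hu⟩
      set σ : V → ℤ := fun x => if h : x = v then (t : ℤ) + σ' ⟨w, hne⟩ else σ' ⟨x, h⟩ with hσdef
      set E : V → ℤ := fun x => if h : x = v then ((a * t - k : ℕ) : ℤ) + k - (a * t : ℕ)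
        else E' ⟨x, h⟩ with hEdef
      have hsub : ∀ x : V, ∑ y, (G.mul x y : ℤ) * (σ y - σ x)
          = (G.mul x v : ℤ) * (σ v - σ x)
            + ∑ y : {u : V // u ≠ v}, (G.mul x y.1 : ℤ) * (σ' y - σ x) := by
        intro x
        rw [sum_split v (fun y => (G.mul x y : ℤ) * (σ y - σ x))]
        congr 1
        refine Finset.sum_congr rfl fun y _ => ?_
        have hy : σ y.1 = σ' y := by
          simp only [hσdef, dif_neg y.2]
        rw [hy]
      have hmul : ∀ z y : {u : V // u ≠ v},
          (((G.deleteVertex v).mul z y : ℕ) : ℤ) = ((G.mul z.1 y.1 : ℕ) : ℤ) := fun _ _ => rfl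
      refine ⟨E, ⟨σ, ?_⟩, ?_, ?_⟩
      · intro x
        by_cases hx : x = v
        · subst hx
          rw [hsub]
          have h1 : σ x = (t : ℤ) + σ' ⟨w, hne⟩ := by simp [hσdef]
          have h2 : ∑ y : {u : V // u ≠ x}, (G.mul x y.1 : ℤ) * (σ' y - σ x)
              = (G.mul x w : ℤ) * (σ' ⟨w, hne⟩ - σ x) := by
            rw [Finset.sum_eq_single (⟨w, hne⟩ : {u : V // u ≠ x})]
            · intro y _ hy
              have hy' : y.1 ≠ w := fun h => hy (Subtype.ext h)
              rw [mul_v_eq_zero G hleaf hy']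
              simp
            · intro h
              exact absurd (Finset.mem_univ _) h
          rw [h2, h1]
          simp only [hEdef, hDdef, dif_pos rfl, if_pos rfl, G.loopless x, ← ha]
          push_cast
          ring
        · rw [hsub]
          have hx1 : σ x = σ' ⟨x, hx⟩ := by simp [hσdef, hx]
          have hE'x := hσ' ⟨x, hx⟩
          by_cases hxw : x = w
          · have hxx : (⟨x, hx⟩ : {u : V // u ≠ v}) = ⟨w, hne⟩ := Subtype.ext hxw
            have hσv : σ v = (t : ℤ) + σ' ⟨w, hne⟩ := by simp [hσdef]
            have hσw : σ' ⟨w, hne⟩ = σ' ⟨x, hx⟩ := by rw [hxx]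
            have hwv : ((G.mul x v : ℕ) : ℤ) = (a : ℤ) := by rw [G.symm x v, hxw, ← ha]
            simp only [hEdef, hDdef, dif_neg hx, if_neg hx]
            rw [hE'x]
            simp only [hmul, hx1, hσv, hσw, hwv, if_pos hxx, add_zero]
            push_cast
            ring
          · have hxv : ((G.mul x v : ℕ) : ℤ) = 0 := by
              rw [G.symm x v, mul_v_eq_zero G hleaf hxw]
              simp
            have hxw' : (⟨x, hx⟩ : {u : V // u ≠ v}) ≠ ⟨w, hne⟩ :=
              fun h => hxw (congrArg Subtype.val h)
            simp only [hEdef, hDdef, dif_neg hx, if_neg hx]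
            rw [hE'x]
            simp only [hmul, hx1, hxv, if_neg hxw', add_zero, zero_mul]
            ring
      · intro x
        by_cases hx : x = v
        · simp only [hEdef, dif_pos hx]
          have h0 : ∀ n : ℕ, (0:ℤ) ≤ ((n - k : ℕ) : ℤ) + (k : ℤ) - (n : ℤ) := by
            intro n
            omega
          exact h0 (a * t)
        · simp only [hEdef, dif_neg hx]
          exact hE'eff ⟨x, hx⟩
      · simp only [hEdef, dif_neg hu]
        exact hE'u
  · have h1 : D v = ((a * t - k : ℕ) : ℤ) := by simp [hDdef]
    have h2 : ∑ x : {u : V // u ≠ v}, D x.1 = (m : ℤ) := by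
      have he : ∑ x : {u : V // u ≠ v}, D x.1 = ∑ x : {u : V // u ≠ v}, D' x :=
        Finset.sum_congr rfl fun x _ => by simp [hDdef, x.2]
      rw [he]
      exact hD'deg
    unfold degree
    rw [sum_split v D, h1, h2]
    push_cast
    ring

private lemma posRank_congr (G : Multigraph V) {D E : V → ℤ} (h : G.PosRank D)
    (hDE : ∀ x, D x = E x) : G.PosRank E := by
  have hfe : D = E := funext hDE
  rwa [hfe] at h

private lemma posRank_restrict (G : Multigraph V) (v w : V)
    (hleaf : ∀ u, G.underlying.Adj v u → u = w) (hne : w ≠ v)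
    (a : ℕ) (ha : a = G.mul v w) (ha0 : 0 < a) (k : ℕ) (D : V → ℤ) (hD : Effective D)
    (hpr : G.PosRank (fun u => D u + if u = v then (k : ℤ) else 0)) (S : ℕ)
    (hS : S = a * (((D v).toNat + k) / a)) :
    (G.deleteVertex v).PosRank (fun u : {u : V // u ≠ v} =>
      D u.1 + if u = ⟨w, hne⟩ then (S : ℤ) else 0) := by
  intro u'
  obtain ⟨E, ⟨σ, hσ⟩, hEeff, hEu⟩ := hpr u'.1
  set s : ℤ := (a : ℤ) * (σ v - σ w) with hs
  have hvsum : ∑ y, (G.mul v y : ℤ) * (σ y - σ v) = (a : ℤ) * (σ w - σ v) := by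
    rw [Finset.sum_eq_single w]
    · rw [← ha]
    · intro y _ hy
      rw [mul_v_eq_zero G hleaf hy]
      simp
    · intro h
      exact absurd (Finset.mem_univ _) h
  have hsle : s ≤ D v + (k : ℤ) := by
    have h0 := hEeff v
    rw [hσ v] at h0
    simp only [eq_self_iff_true, if_true] at h0
    rw [hvsum] at h0
    rw [hs]
    linarith
  have hsS : s ≤ (S : ℤ) := by
    have hc : ((D v).toNat : ℤ) = D v := Int.toNat_of_nonneg (hD v)
    have hX : ((((D v).toNat + k : ℕ)) : ℤ) = D v + (k : ℤ) := by push_cast [hc]; ring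
    have hSz : (S : ℤ) = (a : ℤ) * (((((D v).toNat + k : ℕ)) : ℤ) / (a : ℤ)) := by
      rw [hS]
      push_cast [Int.natCast_div]
      ring
    have h2 : σ v - σ w ≤ ((((D v).toNat + k : ℕ)) : ℤ) / (a : ℤ) := by
      rw [Int.le_ediv_iff_mul_le (by exact_mod_cast ha0)]
      rw [hX]
      linarith [hsle]
    rw [hSz, hs]
    exact mul_le_mul_of_nonneg_left h2 (by positivity)
  have hsplit : ∀ x : V, ∑ y, (G.mul x y : ℤ) * (σ y - σ x)
      = (G.mul x v : ℤ) * (σ v - σ x)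
        + ∑ y : {u : V // u ≠ v}, (G.mul x y.1 : ℤ) * (σ y.1 - σ x) :=
    fun x => sum_split v _
  have hmul : ∀ z y : {u : V // u ≠ v},
      (((G.deleteVertex v).mul z y : ℕ) : ℤ) = ((G.mul z.1 y.1 : ℕ) : ℤ) := fun _ _ => rfl
  refine ⟨fun x => E x.1 + if x = ⟨w, hne⟩ then (S : ℤ) - s else 0,
    ⟨fun x => σ x.1, ?_⟩, ?_, ?_⟩
  · intro x
    simp only []
    rw [hσ x.1, hsplit x.1]
    simp only [hmul, if_neg x.2]
    by_cases hxw : x = ⟨w, hne⟩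
    · have hxw1 : x.1 = w := congrArg Subtype.val hxw
      have hwv : ((G.mul x.1 v : ℕ) : ℤ) = (a : ℤ) := by rw [G.symm x.1 v, hxw1, ← ha]
      have hσx : σ x.1 = σ w := by rw [hxw1]
      simp only [if_pos hxw, hwv, hσx, hs]
      ring
    · have hxw1 : x.1 ≠ w := fun h => hxw (Subtype.ext h)
      have hxv : ((G.mul x.1 v : ℕ) : ℤ) = 0 := by
        rw [G.symm x.1 v, mul_v_eq_zero G hleaf hxw1]
        simp
      simp only [if_neg hxw, hxv]
      ring
  · intro x
    have h1 : (0 : ℤ) ≤ if x = ⟨w, hne⟩ then (S : ℤ) - s else 0 := by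
      split
      · linarith [hsS]
      · rfl
    exact add_nonneg (hEeff x.1) h1
  · have h1 : (0 : ℤ) ≤ if u' = ⟨w, hne⟩ then (S : ℤ) - s else 0 := by
      split
      · linarith [hsS]
      · rfl
    exact le_add_of_le_of_nonneg hEu h1

private lemma lower_aux (G : Multigraph V) (v w : V)
    (hleaf : ∀ u, G.underlying.Adj v u → u = w) (hne : w ≠ v)
    (a : ℕ) (ha : a = G.mul v w) (ha0 : 0 < a) (k : ℕ) (hk : 0 < k) :
    min ((G.deleteVertex v).fmin ⟨w, hne⟩ (a * (k / a)))
      (a * ((k + a - 1) / a) - k + (G.deleteVertex v).fmin ⟨w, hne⟩ (a * ((k + a - 1) / a)))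
    ≤ G.fmin v k := by
  classical
  obtain ⟨D, hDeff, hDpr, hDdeg⟩ := fmin_exists G v k
  set c := (D v).toNat with hc
  have hcD : (c : ℤ) = D v := Int.toNat_of_nonneg (hDeff v)
  set S := a * ((c + k) / a) with hS
  have hpr' := posRank_restrict G v w hleaf hne a ha ha0 k D hDeff hDpr S (by rw [hS, hc])
  set e := (∑ x : {u : V // u ≠ v}, D x.1).toNat with hedef
  have he1 : (e : ℤ) = ∑ x : {u : V // u ≠ v}, D x.1 :=
    Int.toNat_of_nonneg (Finset.sum_nonneg fun x _ => hDeff x.1)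
  have he2 : G.fmin v k = c + e := by
    have hsplit : ((G.fmin v k : ℕ) : ℤ) = D v + ∑ x : {u : V // u ≠ v}, D x.1 := by
      rw [← hDdeg]
      exact sum_split v D
    have : ((G.fmin v k : ℕ) : ℤ) = ((c + e : ℕ) : ℤ) := by
      rw [hsplit, ← hcD, ← he1]
      push_cast
      ring
    exact_mod_cast this
  have hM : k ≤ a * ((k + a - 1) / a) := by
    have h1 := Nat.div_add_mod (k + a - 1) a
    have h2 := Nat.mod_lt (k + a - 1) ha0
    omega
  have hSck : S ≤ c + k := by
    have h1 := Nat.div_add_mod (c + k) a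
    omega
  by_cases hcase : a * ((k + a - 1) / a) ≤ S
  · set M := a * ((k + a - 1) / a) with hMdef
    have hmem : (G.deleteVertex v).fmin ⟨w, hne⟩ M ≤ e + (S - M) := by
      apply Nat.sInf_le
      refine ⟨fun x => D x.1 + if x = ⟨w, hne⟩ then ((S - M : ℕ) : ℤ) else 0, ?_, ?_, ?_⟩
      · intro x
        have h1 : (0 : ℤ) ≤ if x = ⟨w, hne⟩ then ((S - M : ℕ) : ℤ) else 0 := by
          split
          · positivity
          · rfl
        have h2 := hDeff x.1
        simp only []
        linarith
      · refine posRank_congr _ hpr' fun x => ?_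
        simp only []
        split
        · have : ((S - M : ℕ) : ℤ) + (M : ℤ) = (S : ℤ) := by
            have : M ≤ S := hcase
            push_cast [Nat.cast_sub this]
            ring
          linarith [this]
        · ring
      · unfold degree
        rw [Finset.sum_add_distrib]
        rw [Finset.sum_ite_eq' Finset.univ (⟨w, hne⟩ : {u : V // u ≠ v})]
        simp only [Finset.mem_univ, if_true, ← he1]
        push_cast
        ring
    have h3 := min_le_right ((G.deleteVertex v).fmin ⟨w, hne⟩ (a * (k / a)))
      (M - k + (G.deleteVertex v).fmin ⟨w, hne⟩ M)
    omega
  · have hSm : S ≤ a * (k / a) := by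
      have h1 : (c + k) / a < (k + a - 1) / a :=
        Nat.lt_of_mul_lt_mul_left (lt_of_not_ge hcase)
      have h2 : (k + a - 1) / a ≤ k / a + 1 := by
        calc (k + a - 1) / a ≤ (k + a) / a := Nat.div_le_div_right (by omega)
          _ = k / a + 1 := Nat.add_div_right k ha0
      have h3 : (c + k) / a ≤ k / a := by omega
      exact Nat.mul_le_mul_left a h3
    have hpr2 : (G.deleteVertex v).PosRank (fun u : {u : V // u ≠ v} =>
        D u.1 + if u = ⟨w, hne⟩ then ((a * (k / a) : ℕ) : ℤ) else 0) := by
      have hmono := posRank_mono (G.deleteVertex v) hpr'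
        (Δ := fun x => if x = ⟨w, hne⟩ then ((a * (k / a) - S : ℕ) : ℤ) else 0)
        (fun x => show (0:ℤ) ≤ if x = ⟨w, hne⟩ then ((a * (k / a) - S : ℕ) : ℤ) else 0 by
          split
          · positivity
          · rfl)
      refine posRank_congr _ hmono fun x => ?_
      split
      · have h4 : ((a * (k / a) - S : ℕ) : ℤ) + (S : ℤ) = ((a * (k / a) : ℕ) : ℤ) := by
          push_cast [Nat.cast_sub hSm]
          ring
        linarith [h4]
      · ring
    have hmem : (G.deleteVertex v).fmin ⟨w, hne⟩ (a * (k / a)) ≤ e := by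
      apply Nat.sInf_le
      refine ⟨fun x => D x.1, fun x => hDeff x.1, posRank_congr _ hpr2 fun u => by
          have hd : (u.instDecidableEq (⟨w, hne⟩ : {u : V // u ≠ v}))
              = Classical.propDecidable (u = ⟨w, hne⟩) := Subsingleton.elim _ _
          congr 1
          rw [hd],
        he1.symm⟩
    have h3 := min_le_left ((G.deleteVertex v).fmin ⟨w, hne⟩ (a * (k / a)))
      (a * ((k + a - 1) / a) - k + (G.deleteVertex v).fmin ⟨w, hne⟩ (a * ((k + a - 1) / a)))
    omega

end Aux

end Multigraph

open Multigraph in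
/-- For a leaf `v` of a banana tree `G` with unique neighbor `w`,
`a = |E(v,w)|`, `G' = G - v`, and any `k > 0`, we have
`f(G, v, k) = min { f(G', w, a·⌊k/a⌋), a·⌈k/a⌉ - k + f(G', w, a·⌈k/a⌉) }`
(here `⌊k/a⌋ = k / a` and `⌈k/a⌉ = (k + a - 1) / a` in natural-number arithmetic). -/
theorem fmin_leaf_recursion_pos
    {V : Type} [Fintype V] (G : Multigraph V) (hG : G.IsBananaTree)
    (v w : V) (hvw : G.underlying.Adj v w)
    (hleaf : ∀ u, G.underlying.Adj v u → u = w)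
    (hne : w ≠ v) (a : ℕ) (ha : a = G.mul v w)
    (k : ℕ) (hk : 0 < k) :
    G.fmin v k = min ((G.deleteVertex v).fmin ⟨w, hne⟩ (a * (k / a)))
      (a * ((k + a - 1) / a) - k + (G.deleteVertex v).fmin ⟨w, hne⟩ (a * ((k + a - 1) / a))) := by
  have ha0 : 0 < a := by rw [ha]; exact hvw
  apply le_antisymm
  · apply le_min
    · have h := Multigraph.fmin_le_aux G v w hleaf hne a ha k hk (k / a)
      have h0 : a * (k / a) - k = 0 := by
        have h1 := Nat.div_add_mod k a
        omega
      simpa [h0] using h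
    · exact Multigraph.fmin_le_aux G v w hleaf hne a ha k hk ((k + a - 1) / a)
  · exact Multigraph.lower_aux G v w hleaf hne a ha ha0 k hk
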